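/- Let A = (cos φ, sin φ; −sin φ, cos φ) be a rotation matrix, and let (M̂, Ĥ) be the induced transformation of (M, H): M̂ = ((cos²φ − sin²φ)M + sinφ cosφ·H − sinφ cosφ)/(2 cosφ sinφ·M + sin²φ·H + cos²φ), Ĥ = (−2 sinφ cosφ·M + cos²φ·H + sin²φ)/(2 cosφ sinφ·M + sin²φ·H + cos²φ). Assume the denominator and Ĥ + 1, H + 1 are nonzero. Then (M̂² − Ĥ)/(Ĥ + 1)² = (M² − H)/(H + 1)². -/

import Mathlib

theorem stmt_10 (M H φ : ℝ) (Mh Hh : ℝ)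
    (hden : 2*Real.cos φ*Real.sin φ*M + (Real.sin φ)^2*H + (Real.cos φ)^2 ≠ 0)
    (hMh : Mh = (((Real.cos φ)^2 - (Real.sin φ)^2)*M + Real.sin φ*Real.cos φ*H
        - Real.sin φ*Real.cos φ) /
      (2*Real.cos φ*Real.sin φ*M + (Real.sin φ)^2*H + (Real.cos φ)^2))
    (hHh : Hh = (-2*Real.sin φ*Real.cos φ*M + (Real.cos φ)^2*H + (Real.sin φ)^2) /
      (2*Real.cos φ*Real.sin φ*M + (Real.sin φ)^2*H + (Real.cos φ)^2))
    (hH1 : H + 1 ≠ 0) (hHh1 : Hh + 1 ≠ 0) :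
    (Mh^2 - Hh) / (Hh + 1)^2 = (M^2 - H) / (H + 1)^2 := by
  have hpy := Real.sin_sq_add_cos_sq φ
  subst hMh hHh
  rw [div_eq_div_iff (by positivity) (by positivity)]
  have hden' : Real.sin φ * (Real.cos φ * M * 2 + Real.sin φ * H) + Real.cos φ ^ 2 ≠ 0 := by
    convert hden using 1; ring
  field_simp
  nlinarith [sq_nonneg (Real.sin φ), sq_nonneg (Real.cos φ), sq_nonneg M, hpy]
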